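/- The expected number of induced rooted forests on k vertices in the binomial random graph G(n,p) equals C(n,k) * q^(-C(k,2)) * (k*p*q + 1)^(k-1), where q = 1/(1-p). -/

import Mathlib

set_option linter.unusedSectionVars false
set_option linter.unusedVariables false
set_option maxHeartbeats 1600000
attribute [local instance] Classical.propDecidable

open MeasureTheory

/-- Bernoulli measure on `Bool` with success probability `p`. -/
noncomputable def bernoulliMeasure (p : ℝ) : Measure Bool :=
  (ENNReal.ofReal p) • Measure.dirac true + (ENNReal.ofReal (1 - p)) • Measure.dirac false

/-- The Erdős–Rényi measure `G(n,p)`: each potential edge (element of `Sym2 (Fin n)`)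
is present independently with probability `p`. -/
noncomputable def erMeasure (n : ℕ) (p : ℝ) : Measure (Sym2 (Fin n) → Bool) :=
  Measure.pi fun _ => bernoulliMeasure p

/-- The graph determined by the edge indicators `ω`. -/
def erGraph (n : ℕ) (ω : Sym2 (Fin n) → Bool) : SimpleGraph (Fin n) where
  Adj u v := u ≠ v ∧ ω s(u, v)
  symm := by
    constructor
    intro u v h
    exact ⟨h.1.symm, by rw [Sym2.eq_swap]; exact h.2⟩
  loopless := by
    constructor
    intro v h
    exact h.1 rfl

/-- The number of induced rooted forests on `k` vertices in `G`: pairs consisting of a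
`k`-element vertex set `S` whose induced subgraph is acyclic, together with a set of
roots `R ⊆ S`, exactly one in each connected component of the induced subgraph. -/
noncomputable def countIndRootedForests (n k : ℕ) (G : SimpleGraph (Fin n)) : ℕ :=
  Nat.card {SR : Finset (Fin n) × Finset (Fin n) //
    SR.1.card = k ∧ SR.2 ⊆ SR.1 ∧
    (G.induce (SR.1 : Set (Fin n))).IsAcyclic ∧
    ∀ v : (SR.1 : Set (Fin n)), ∃! r : (SR.1 : Set (Fin n)),
      (r : Fin n) ∈ SR.2 ∧ (G.induce (SR.1 : Set (Fin n))).Reachable r v}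

section ForestTheory

open SimpleGraph

variable {V : Type*} [Fintype V] [DecidableEq V]

/-- A pair (graph, root set) is good if the graph is acyclic and each vertex is
reachable from exactly one root. -/
def goodPair (G : SimpleGraph V) (R : Finset V) : Prop :=
  G.IsAcyclic ∧ ∀ w : V, ∃! r : V, r ∈ R ∧ G.Reachable r w

lemma isAcyclic_anti {G G' : SimpleGraph V} (h : G ≤ G') (ha : G'.IsAcyclic) : G.IsAcyclic := by
  intro v c hc
  exact ha (c.mapLe h) (hc.mapLe h)

/-- Reachability decomposition through an added edge. -/
lemma reachable_sup_edge {G : SimpleGraph V} {u v x y : V}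
    (h : (G ⊔ fromEdgeSet {s(u,v)}).Reachable x y) :
    G.Reachable x y ∨ (G.Reachable x u ∧ G.Reachable v y) ∨
      (G.Reachable x v ∧ G.Reachable u y) := by
  obtain ⟨w⟩ := h
  induction w with
  | nil => exact Or.inl (Reachable.refl _)
  | @cons a b c hadj w ih =>
    rcases (sup_adj _ _ _ _).1 hadj with hG | hX
    · have hab : G.Reachable a b := hG.reachable
      rcases ih with h1 | ⟨h1, h2⟩ | ⟨h1, h2⟩
      · exact Or.inl (hab.trans h1)
      · exact Or.inr (Or.inl ⟨hab.trans h1, h2⟩)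
      · exact Or.inr (Or.inr ⟨hab.trans h1, h2⟩)
    · have he : s(a, b) = s(u, v) := by
        have := (fromEdgeSet_adj _).1 hX
        simpa using this.1
      rcases Sym2.eq_iff.1 he with ⟨rfl, rfl⟩ | ⟨rfl, rfl⟩
      · rcases ih with h1 | ⟨h1, h2⟩ | ⟨h1, h2⟩
        · exact Or.inr (Or.inl ⟨Reachable.refl _, h1⟩)
        · exact Or.inr (Or.inl ⟨Reachable.refl _, h2⟩)
        · exact Or.inl h2
      · rcases ih with h1 | ⟨h1, h2⟩ | ⟨h1, h2⟩
        · exact Or.inr (Or.inr ⟨Reachable.refl _, h1⟩)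
        · exact Or.inl h2
        · exact Or.inr (Or.inr ⟨Reachable.refl _, h2⟩)

lemma adj_sup_edge {G : SimpleGraph V} {u v : V} (huv : u ≠ v) :
    (G ⊔ fromEdgeSet {s(u,v)}).Adj u v :=
  (sup_adj _ _ _ _).2 (Or.inr ((fromEdgeSet_adj _).2 ⟨rfl, huv⟩))

lemma single_edge_sdiff_ne {u v a b : V} (h : s(u,v) ≠ s(a,b)) :
    (fromEdgeSet {s(u,v)} : SimpleGraph V) \ fromEdgeSet {s(a,b)} = fromEdgeSet {s(u,v)} := by
  ext x y
  simp only [sdiff_adj, fromEdgeSet_adj, Set.mem_singleton_iff]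
  constructor
  · rintro ⟨h1, _⟩; exact h1
  · rintro ⟨h1, h2⟩
    refine ⟨⟨h1, h2⟩, ?_⟩
    rintro ⟨h3, -⟩
    exact h (h1 ▸ h3)

lemma sup_edge_sdiff_self {G : SimpleGraph V} {u v : V} (hne : ¬ G.Adj u v) :
    (G ⊔ fromEdgeSet {s(u,v)}) \ fromEdgeSet {s(u,v)} = G := by
  ext x y
  simp only [sdiff_adj, sup_adj, fromEdgeSet_adj, Set.mem_singleton_iff]
  constructor
  · rintro ⟨h1 | ⟨h1, h2⟩, h3⟩
    · exact h1
    · exact absurd ⟨h1, h2⟩ h3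
  · intro h1
    refine ⟨Or.inl h1, ?_⟩
    rintro ⟨h2, h3⟩
    rcases Sym2.eq_iff.1 h2 with ⟨rfl, rfl⟩ | ⟨rfl, rfl⟩
    · exact hne h1
    · exact hne h1.symm

/-- Adding an edge between two different components of an acyclic graph keeps it acyclic. -/
lemma acyclic_sup_edge {G : SimpleGraph V} {u v : V} (ha : G.IsAcyclic)
    (hr : ¬ G.Reachable u v) : (G ⊔ fromEdgeSet {s(u,v)}).IsAcyclic := by
  have huv : u ≠ v := fun h => hr (h ▸ Reachable.refl u)
  have hGuv : ¬ G.Adj u v := fun h => hr h.reachable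
  rw [isAcyclic_iff_forall_adj_isBridge]
  intro a b hab
  rw [isBridge_iff, deleteEdges]
  by_cases he : s(a, b) = s(u, v)
  · have : (G ⊔ fromEdgeSet {s(u,v)}) \ fromEdgeSet {s(a,b)} = G := by
      rw [he]; exact sup_edge_sdiff_self hGuv
    rw [this]
    rcases Sym2.eq_iff.1 he with ⟨rfl, rfl⟩ | ⟨rfl, rfl⟩
    · exact hr
    · exact fun h => hr h.symm
  · -- a b is an old edge
    have hGab : G.Adj a b := by
      rcases (sup_adj _ _ _ _).1 hab with h | h
      · exact h
      · exact absurd (by simpa using ((fromEdgeSet_adj _).1 h).1) he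
    have hbr := (isAcyclic_iff_forall_adj_isBridge.1 ha) hGab
    rw [isBridge_iff, deleteEdges] at hbr
    intro hreach
    have hrw : (G ⊔ fromEdgeSet {s(u,v)}) \ fromEdgeSet {s(a,b)}
        = (G \ fromEdgeSet {s(a,b)}) ⊔ fromEdgeSet {s(u,v)} := by
      rw [sup_sdiff, single_edge_sdiff_ne (fun h => he h.symm)]
    rw [hrw] at hreach
    have hle : G \ fromEdgeSet {s(a,b)} ≤ G := sdiff_le
    rcases reachable_sup_edge hreach with h1 | ⟨h1, h2⟩ | ⟨h1, h2⟩
    · exact hbr h1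
    · -- a ~ u, v ~ b in G-ab ⟹ u ~ v in G
      exact hr (((h1.mono hle).symm.trans hGab.reachable).trans (h2.mono hle).symm)
    · exact hr (((h2.mono hle).trans hGab.reachable.symm).trans (h1.mono hle))

namespace ForestCount

variable {G : SimpleGraph V} {R : Finset V} {u v a b r : V}

lemma root_eq (hg : goodPair G R) (hr : r ∈ R) (hs : a ∈ R)
    (h1 : G.Reachable r u) (h2 : G.Reachable a u) : r = a := by
  obtain ⟨x, -, hx⟩ := hg.2 u
  rw [hx r ⟨hr, h1⟩, hx a ⟨hs, h2⟩]

lemma root_self (hg : goodPair G R) (hr : r ∈ R) (h1 : G.Reachable a r)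
    (ha : a ∈ R) : a = r :=
  root_eq hg ha hr h1 (Reachable.refl r)

lemma edge_le (h : G.Adj a b) : fromEdgeSet {s(a,b)} ≤ G := by
  intro x y hxy
  obtain ⟨h1, -⟩ := (fromEdgeSet_adj _).1 hxy
  rw [Set.mem_singleton_iff] at h1
  rcases Sym2.eq_iff.1 h1 with ⟨rfl, rfl⟩ | ⟨rfl, rfl⟩
  · exact h
  · exact h.symm

/-- The `leftOK` condition: the orientation of an edge for deletion. -/
def leftOK (G : SimpleGraph V) (R : Finset V) (a b : V) : Prop :=
  G.Adj a b ∧ a ∉ R ∧ goodPair (G \ fromEdgeSet {s(a,b)}) (insert a R)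

lemma sdiff_sup_edge (h : G.Adj a b) :
    (G \ fromEdgeSet {s(a,b)}) ⊔ fromEdgeSet {s(a,b)} = G :=
  sdiff_sup_cancel (edge_le h)

/-- Decomposition of reachability in `G` through the edge `a b`. -/
lemma reachable_decomp (h : G.Adj a b) (hxy : G.Reachable u v) :
    (G \ fromEdgeSet {s(a,b)}).Reachable u v ∨
    ((G \ fromEdgeSet {s(a,b)}).Reachable u a ∧ (G \ fromEdgeSet {s(a,b)}).Reachable b v) ∨
    ((G \ fromEdgeSet {s(a,b)}).Reachable u b ∧ (G \ fromEdgeSet {s(a,b)}).Reachable a v) := by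
  have := sdiff_sup_edge h
  exact reachable_sup_edge (by rw [this]; exact hxy)

lemma not_reach_sdiff (hg : G.IsAcyclic) (h : G.Adj a b) :
    ¬ (G \ fromEdgeSet {s(a,b)}).Reachable a b := by
  have := (isAcyclic_iff_forall_adj_isBridge.1 hg) h
  exact isBridge_iff.1 this

/-- If `r` is a root of `a`, `a ~ b`, and `r` does not reach `a` after deleting the edge,
then the orientation `(a, b)` is the valid one. -/
lemma leftOK_of_side (hg : goodPair G R) (hab : G.Adj a b) (hr : r ∈ R)
    (hra : G.Reachable r a)
    (hside : ¬ (G \ fromEdgeSet {s(a,b)}).Reachable r a) : leftOK G R a b := by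
  set G' := G \ fromEdgeSet {s(a,b)} with hG'
  have hle : G' ≤ G := sdiff_le
  have hanotR : a ∉ R := by
    intro haR
    have hra' : r = a := root_eq hg hr haR hra (Reachable.refl a)
    exact hside (hra' ▸ Reachable.refl r)
  refine ⟨hab, hanotR, isAcyclic_anti hle hg.1, ?_⟩
  intro w
  by_cases hw : G'.Reachable a w
  · refine ⟨a, ⟨Finset.mem_insert_self a R, hw⟩, ?_⟩
    rintro s ⟨hsmem, hsw⟩
    rcases Finset.mem_insert.1 hsmem with h | hsR
    · exact h
    · exfalso
      have h1 : G.Reachable s a := (hsw.trans hw.symm).mono hle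
      have h2 : s = r := root_eq hg hsR hr h1 hra
      exact hside (h2 ▸ hsw.trans hw.symm)
  · obtain ⟨rw, hrw, hwuniq⟩ := hg.2 w
    have hrw' : G'.Reachable rw w := by
      rcases reachable_decomp hab hrw.2 with h1 | ⟨h1, h2⟩ | ⟨h1, h2⟩
      · exact h1
      · exfalso
        have : rw = r := root_eq hg hrw.1 hr (h1.mono hle) hra
        exact hside (this ▸ h1)
      · exact absurd h2 hw
    refine ⟨rw, ⟨Finset.mem_insert_of_mem hrw.1, hrw'⟩, ?_⟩
    rintro s ⟨hsmem, hsw⟩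
    rcases Finset.mem_insert.1 hsmem with h | hsR
    · exact absurd (h ▸ hsw) hw
    · exact hwuniq s ⟨hsR, hsw.mono hle⟩

/-- At least one orientation of an edge is valid. -/
lemma leftOK_or (hg : goodPair G R) (hab : G.Adj a b) :
    leftOK G R a b ∨ leftOK G R b a := by
  obtain ⟨r, hr, -⟩ := hg.2 a
  set G' := G \ fromEdgeSet {s(a,b)} with hG'
  have hone : G'.Reachable r a ∨ G'.Reachable r b := by
    rcases reachable_decomp hab hr.2 with h1 | ⟨h1, h2⟩ | ⟨h1, h2⟩
    · exact Or.inl h1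
    · exact Or.inl h1
    · exact Or.inr h1
  have hnb : ¬ (G'.Reachable r a ∧ G'.Reachable r b) := by
    rintro ⟨h1, h2⟩
    exact not_reach_sdiff hg.1 hab (h1.symm.trans h2)
  rcases hone with h | h
  · -- r reaches a without the edge, so b is cut off : orientation (b, a)
    right
    have hside : ¬ G'.Reachable r b := fun hc => hnb ⟨h, hc⟩
    have : (G \ fromEdgeSet {s(b,a)}) = G' := by rw [Sym2.eq_swap]
    refine leftOK_of_side hg hab.symm hr.1 (hr.2.trans hab.reachable) ?_
    rw [this]; exact hside
  · left
    have hside : ¬ G'.Reachable r a := fun hc => hnb ⟨hc, h⟩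
    exact leftOK_of_side hg hab hr.1 hr.2 hside

/-- At most one orientation of an edge is valid. -/
lemma leftOK_not_both (hg : goodPair G R) (hab : G.Adj a b) :
    ¬ (leftOK G R a b ∧ leftOK G R b a) := by
  rintro ⟨⟨-, haR, hga⟩, ⟨-, hbR, hgb⟩⟩
  obtain ⟨r, hr, -⟩ := hg.2 a
  set G' := G \ fromEdgeSet {s(a,b)} with hG'
  have hswap : (G \ fromEdgeSet {s(b,a)}) = G' := by rw [Sym2.eq_swap]
  rw [hswap] at hgb
  have hone : G'.Reachable r a ∨ G'.Reachable r b := by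
    rcases reachable_decomp hab hr.2 with h1 | ⟨h1, h2⟩ | ⟨h1, h2⟩
    · exact Or.inl h1
    · exact Or.inl h1
    · exact Or.inr h1
  rcases hone with h | h
  · -- two roots (r and a) for a in (G', insert a R)
    have : r = a := root_eq hga (Finset.mem_insert_of_mem hr.1) (Finset.mem_insert_self a R)
      h (Reachable.refl a)
    exact haR (this ▸ hr.1)
  · have : r = b := root_eq hgb (Finset.mem_insert_of_mem hr.1) (Finset.mem_insert_self b R)
      h (Reachable.refl b)
    exact hbR (this ▸ hr.1)

/-- Adding an edge from a root `u` to a vertex `v` in another component. -/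
lemma goodPair_sup_edge (hg : goodPair G R) (hu : u ∈ R) (hr : ¬ G.Reachable u v) :
    goodPair (G ⊔ fromEdgeSet {s(u,v)}) (R.erase u) := by
  have huv : u ≠ v := fun h => hr (h ▸ Reachable.refl u)
  set H := G ⊔ fromEdgeSet {s(u,v)} with hH
  have hle : G ≤ H := le_sup_left
  have hadj : H.Adj u v := adj_sup_edge huv
  refine ⟨acyclic_sup_edge hg.1 hr, ?_⟩
  intro w
  by_cases hA : G.Reachable u w
  · -- the root of w used to be u; now it is the root of v
    obtain ⟨s₀, hs₀, -⟩ := hg.2 v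
    have hs₀u : s₀ ≠ u := fun h => hr (h ▸ hs₀.2)
    have hroot_w : ∀ s ∈ R, G.Reachable s w → s = u := by
      intro s hs hsw
      exact root_eq hg hs hu hsw hA
    refine ⟨s₀, ⟨Finset.mem_erase.2 ⟨hs₀u, hs₀.1⟩, ?_⟩, ?_⟩
    · exact ((hs₀.2.mono hle).trans hadj.symm.reachable).trans (hA.mono hle)
    · rintro s ⟨hsmem, hsw⟩
      obtain ⟨hsu, hsR⟩ := Finset.mem_erase.1 hsmem
      rcases reachable_sup_edge hsw with h1 | ⟨h1, h2⟩ | ⟨h1, h2⟩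
      · exact absurd (hroot_w s hsR h1) hsu
      · exact absurd (root_self hg hu h1 hsR) hsu
      · exact root_eq hg hsR hs₀.1 h1 hs₀.2
  · obtain ⟨rw, hrw, hwuniq⟩ := hg.2 w
    have hrwu : rw ≠ u := fun h => hA (h ▸ hrw.2)
    refine ⟨rw, ⟨Finset.mem_erase.2 ⟨hrwu, hrw.1⟩, hrw.2.mono hle⟩, ?_⟩
    rintro s ⟨hsmem, hsw⟩
    obtain ⟨hsu, hsR⟩ := Finset.mem_erase.1 hsmem
    rcases reachable_sup_edge hsw with h1 | ⟨h1, h2⟩ | ⟨h1, h2⟩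
    · exact hwuniq s ⟨hsR, h1⟩
    · exact absurd (root_self hg hu h1 hsR) hsu
    · exact absurd h2 hA

end ForestCount



namespace ForestCount

variable {G : SimpleGraph V} {R : Finset V} {u v a b r : V}

/-- number of edges -/
noncomputable def ec (G : SimpleGraph V) : ℕ := G.edgeSet.ncard

lemma ec_bot : ec (⊥ : SimpleGraph V) = 0 := by
  simp [ec]

lemma ec_sup_edge (huv : u ≠ v) (h : ¬ G.Adj u v) :
    ec (G ⊔ fromEdgeSet {s(u,v)}) = ec G + 1 := by
  have hd : ({s(u,v)} : Set (Sym2 V)) \ {e | e.IsDiag} = {s(u,v)} := by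
    ext e
    simp only [Set.mem_diff, Set.mem_singleton_iff, Set.mem_setOf_eq]
    constructor
    · rintro ⟨h1, -⟩; exact h1
    · rintro rfl; exact ⟨rfl, by simp [Sym2.mk_isDiag_iff, huv]⟩
  have h1 : (G ⊔ fromEdgeSet {s(u,v)}).edgeSet = insert s(u,v) G.edgeSet := by
    rw [edgeSet_sup, edgeSet_fromEdgeSet, show ({s(u,v)} : Set (Sym2 V)) \ Sym2.diagSet = {s(u,v)} from hd, Set.union_singleton]
  rw [ec, h1, Set.ncard_insert_of_notMem (by simpa using h)]
  rfl

lemma ec_sdiff_edge (h : G.Adj a b) :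
    ec (G \ fromEdgeSet {s(a,b)}) + 1 = ec G := by
  have hd : ({s(a,b)} : Set (Sym2 V)) \ {e | e.IsDiag} = {s(a,b)} := by
    ext e
    simp only [Set.mem_diff, Set.mem_singleton_iff, Set.mem_setOf_eq]
    constructor
    · rintro ⟨h1, -⟩; exact h1
    · rintro rfl; exact ⟨rfl, by simp [Sym2.mk_isDiag_iff, h.ne]⟩
  have h1 : (G \ fromEdgeSet {s(a,b)}).edgeSet = G.edgeSet \ {s(a,b)} := by
    rw [edgeSet_sdiff, edgeSet_fromEdgeSet, show ({s(a,b)} : Set (Sym2 V)) \ Sym2.diagSet = {s(a,b)} from hd]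
  rw [ec, h1, Set.ncard_diff_singleton_add_one (by simpa using h)]
  rfl

lemma goodPair_bot : goodPair (⊥ : SimpleGraph V) Finset.univ := by
  constructor
  · intro v c hc
    cases c with
    | nil => exact hc.ne_nil rfl
    | cons h p => exact h.elim
  · intro w
    exact ⟨w, ⟨Finset.mem_univ w, Reachable.refl w⟩,
      fun s hs => reachable_bot.1 hs.2⟩

lemma goodPair_ec_zero (hg : goodPair G R) (h : ec G = 0) :
    G = ⊥ ∧ R = Finset.univ := by
  have hG : G = ⊥ := by
    rw [← edgeSet_eq_empty]
    exact (Set.ncard_eq_zero G.edgeSet.toFinite).1 h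
  subst hG
  refine ⟨rfl, Finset.eq_univ_iff_forall.2 fun w => ?_⟩
  obtain ⟨r, hr, -⟩ := hg.2 w
  exact (reachable_bot.1 hr.2) ▸ hr.1

/-- In a good pair with `i` edges, the root set has `card V - i` elements. -/
lemma card_roots : ∀ i, ∀ (G : SimpleGraph V) (R : Finset V),
    goodPair G R → ec G = i → R.card + i = Fintype.card V := by
  intro i
  induction i with
  | zero =>
    intro G R hg h
    obtain ⟨-, rfl⟩ := goodPair_ec_zero hg h
    simp [Finset.card_univ]
  | succ i ih =>
    intro G R hg h
    have hne : G.edgeSet.Nonempty := by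
      rw [Set.nonempty_iff_ne_empty]
      intro hc
      rw [ec, hc, Set.ncard_empty] at h
      omega
    obtain ⟨e, he⟩ := hne
    induction e using Sym2.ind with
    | _ x y =>
    have hxy : G.Adj x y := he
    have key : ∀ c d : V, leftOK G R c d → G.Adj c d → R.card + (i+1) = Fintype.card V := by
      intro c d hok hcd
      obtain ⟨-, hcR, hgood⟩ := hok
      have hec : ec (G \ fromEdgeSet {s(c,d)}) = i := by
        have := ec_sdiff_edge hcd
        omega
      have := ih _ _ hgood hec
      rw [Finset.card_insert_of_notMem hcR] at this
      omega
    rcases leftOK_or hg hxy with hok | hok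
    · exact key x y hok hxy
    · exact key y x hok hxy.symm

/-- Components of a good pair, indexed by roots, partition the vertices. -/
lemma sum_comp (hg : goodPair G R) :
    ∑ u ∈ R, (Finset.univ.filter fun w => G.Reachable u w).card = Fintype.card V := by
  classical
  have hchoice : ∀ w : V, ∃ r, r ∈ R ∧ G.Reachable r w := fun w => (hg.2 w).exists
  set f : V → V := fun w => Classical.choose (hchoice w) with hf
  have hfmem : ∀ w, f w ∈ R ∧ G.Reachable (f w) w := fun w => Classical.choose_spec (hchoice w)
  have := Finset.card_eq_sum_card_fiberwise (s := Finset.univ) (t := R) (f := f)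
    (fun w _ => (hfmem w).1)
  rw [Finset.card_univ] at this
  rw [this]
  refine Finset.sum_congr rfl fun u hu => ?_
  congr 1
  ext w
  simp only [Finset.mem_filter, Finset.mem_univ, true_and]
  constructor
  · intro hr
    exact root_eq hg (hfmem w).1 hu (hfmem w).2 hr
  · intro h
    exact h ▸ (hfmem w).2

end ForestCount

namespace ForestCount
variable {G : SimpleGraph V} {R : Finset V} {u v a b r : V}
section BigCount
variable (V) in
/-- good pairs with `i` edges -/
noncomputable def Mfil (i : ℕ) : Finset (SimpleGraph V × Finset V) :=
  Finset.univ.filter fun GR => goodPair GR.1 GR.2 ∧ ec GR.1 = i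

variable (V) in
/-- good pairs with `i+1` edges together with a deletable oriented edge -/
noncomputable def Xfil (i : ℕ) : Finset ((SimpleGraph V × Finset V) × V × V) :=
  Finset.univ.filter fun Z =>
    goodPair Z.1.1 Z.1.2 ∧ ec Z.1.1 = i + 1 ∧ leftOK Z.1.1 Z.1.2 Z.2.1 Z.2.2

variable (V) in
/-- good pairs with `i` edges together with an extension move -/
noncomputable def Yfil (i : ℕ) : Finset ((SimpleGraph V × Finset V) × V × V) :=
  Finset.univ.filter fun Z =>
    goodPair Z.1.1 Z.1.2 ∧ ec Z.1.1 = i ∧ Z.2.1 ∈ Z.1.2 ∧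
      ¬ Z.1.1.Reachable Z.2.1 Z.2.2

lemma mem_Mfil {i : ℕ} {GR : SimpleGraph V × Finset V} :
    GR ∈ Mfil V i ↔ goodPair GR.1 GR.2 ∧ ec GR.1 = i := by
  simp [Mfil]

lemma mem_Xfil {i : ℕ} {Z : (SimpleGraph V × Finset V) × V × V} :
    Z ∈ Xfil V i ↔ goodPair Z.1.1 Z.1.2 ∧ ec Z.1.1 = i + 1 ∧
      leftOK Z.1.1 Z.1.2 Z.2.1 Z.2.2 := by
  simp [Xfil]

lemma mem_Yfil {i : ℕ} {Z : (SimpleGraph V × Finset V) × V × V} :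
    Z ∈ Yfil V i ↔ goodPair Z.1.1 Z.1.2 ∧ ec Z.1.1 = i ∧ Z.2.1 ∈ Z.1.2 ∧
      ¬ Z.1.1.Reachable Z.2.1 Z.2.2 := by
  simp [Yfil]

lemma cardA (i : ℕ) : (Xfil V i).card = (Mfil V (i+1)).card * (i + 1) := by
  have hmap : ∀ Z ∈ Xfil V i, Z.1 ∈ Mfil V (i+1) := by
    intro Z hZ
    obtain ⟨h1, h2, -⟩ := mem_Xfil.1 hZ
    exact mem_Mfil.2 ⟨h1, h2⟩
  rw [Finset.card_eq_sum_card_fiberwise hmap]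
  have hfib : ∀ GR ∈ Mfil V (i+1),
      ((Xfil V i).filter fun Z => Z.1 = GR).card = i + 1 := by
    intro GR hGR
    obtain ⟨hgood, hec⟩ := mem_Mfil.1 hGR
    have hcard : i + 1 = GR.1.edgeSet.toFinset.card := by
      rw [← Set.ncard_eq_toFinset_card']
      exact hec.symm
    rw [hcard]
    apply Finset.card_bij (fun Z _ => s(Z.2.1, Z.2.2))
    · intro Z hZ
      obtain ⟨hZX, hZ1⟩ := Finset.mem_filter.1 hZ
      obtain ⟨-, -, hok⟩ := mem_Xfil.1 hZX
      rw [hZ1] at hok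
      simpa using hok.1
    · intro Z hZmem Z' hZ'mem heq
      obtain ⟨hZX, hZ1⟩ := Finset.mem_filter.1 hZmem
      obtain ⟨hZ'X, hZ'1⟩ := Finset.mem_filter.1 hZ'mem
      obtain ⟨-, -, hok⟩ := mem_Xfil.1 hZX
      obtain ⟨-, -, hok'⟩ := mem_Xfil.1 hZ'X
      rw [hZ1] at hok
      rw [hZ'1] at hok'
      rcases Sym2.eq_iff.1 heq with ⟨h1, h2⟩ | ⟨h1, h2⟩
      · exact Prod.ext (hZ1.trans hZ'1.symm) (Prod.ext h1 h2)
      · exfalso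
        rw [h1, h2] at hok
        exact leftOK_not_both hgood hok'.1 ⟨hok', hok⟩
    · intro e he
      rw [Set.mem_toFinset] at he
      induction e using Sym2.ind with
      | _ x y =>
      have hxy : GR.1.Adj x y := he
      rcases leftOK_or hgood hxy with hok | hok
      · refine ⟨⟨GR, x, y⟩, ?_, rfl⟩
        exact Finset.mem_filter.2 ⟨mem_Xfil.2 ⟨hgood, hec, hok⟩, rfl⟩
      · refine ⟨⟨GR, y, x⟩, ?_, Sym2.eq_swap⟩
        exact Finset.mem_filter.2 ⟨mem_Xfil.2 ⟨hgood, hec, hok⟩, rfl⟩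
  rw [Finset.sum_congr rfl hfib, Finset.sum_const, smul_eq_mul]

lemma cardXY (i : ℕ) : (Xfil V i).card = (Yfil V i).card := by
  apply Finset.card_bij
    (fun Z _ => ((Z.1.1 \ fromEdgeSet {s(Z.2.1, Z.2.2)}, insert Z.2.1 Z.1.2), Z.2))
  · rintro ⟨⟨G, R⟩, u, v⟩ hZ
    obtain ⟨hgood, hec, hok⟩ := mem_Xfil.1 hZ
    obtain ⟨hadj, huR, hgood'⟩ := hok
    refine mem_Yfil.2 ⟨hgood', ?_, Finset.mem_insert_self _ _, ?_⟩
    · show ec (G \ fromEdgeSet {s(u, v)}) = i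
      have h5 : ec (G \ fromEdgeSet {s(u, v)}) + 1 = ec G := ec_sdiff_edge hadj
      have hec2 : ec G = i + 1 := hec
      omega
    · exact not_reach_sdiff hgood.1 hadj
  · rintro ⟨⟨G, R⟩, u, v⟩ hZ ⟨⟨G', R'⟩, u', v'⟩ hZ' heq
    obtain ⟨hgood, hec, hok⟩ := mem_Xfil.1 hZ
    obtain ⟨hgood', hec', hok'⟩ := mem_Xfil.1 hZ'
    dsimp only at hgood hec hok hgood' hec' hok'
    simp only [Prod.mk.injEq] at heq
    obtain ⟨⟨hG, hR⟩, hu, hv⟩ := heq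
    subst hu; subst hv
    have hGeq : G = G' := by
      have e1 : (G \ fromEdgeSet {s(u,v)}) ⊔ fromEdgeSet {s(u,v)} = G := sdiff_sup_edge hok.1
      have e2 : (G' \ fromEdgeSet {s(u,v)}) ⊔ fromEdgeSet {s(u,v)} = G' := sdiff_sup_edge hok'.1
      rw [← e1, ← e2, hG]
    have hReq : R = R' := by
      have e1 : (insert u R).erase u = R := by
        rw [Finset.erase_insert hok.2.1]
      have e2 : (insert u R').erase u = R' := by
        rw [Finset.erase_insert hok'.2.1]
      rw [← e1, ← e2, hR]
    simp [hGeq, hReq]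
  · rintro ⟨⟨G', R'⟩, u, v⟩ hZ
    obtain ⟨hgood', hec', huR', hreach⟩ := mem_Yfil.1 hZ
    have huv : u ≠ v := fun h => hreach (h ▸ Reachable.refl u)
    have hnadj : ¬ G'.Adj u v := fun h => hreach h.reachable
    dsimp only at hgood' hec' huR' hreach
    refine ⟨⟨(G' ⊔ fromEdgeSet {s(u,v)}, R'.erase u), u, v⟩, ?_, ?_⟩
    · refine mem_Xfil.2 ⟨goodPair_sup_edge hgood' huR' hreach, ?_, ?_⟩
      · show ec (G' ⊔ fromEdgeSet {s(u,v)}) = i + 1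
        rw [ec_sup_edge huv hnadj, hec']
      · show leftOK (G' ⊔ fromEdgeSet {s(u,v)}) (R'.erase u) u v
        refine ⟨adj_sup_edge huv, fun hmem => absurd rfl (Finset.mem_erase.1 hmem).1, ?_⟩
        rw [sup_edge_sdiff_self hnadj, Finset.insert_erase huR']
        exact hgood'
    · show (((G' ⊔ fromEdgeSet {s(u,v)}) \ fromEdgeSet {s(u,v)}, insert u (R'.erase u)), u, v)
        = ((G', R'), u, v)
      rw [sup_edge_sdiff_self hnadj, Finset.insert_erase huR']

lemma cardY (i : ℕ) :
    (Yfil V i).card + Fintype.card V * (Mfil V i).card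
      = Fintype.card V * (Fintype.card V - i) * (Mfil V i).card := by
  have hmap : ∀ Z ∈ Yfil V i, Z.1 ∈ Mfil V i := by
    intro Z hZ
    obtain ⟨h1, h2, -⟩ := mem_Yfil.1 hZ
    exact mem_Mfil.2 ⟨h1, h2⟩
  rw [Finset.card_eq_sum_card_fiberwise hmap]
  -- per (G,R), the fiber has the same card as the set of moves (u,v)
  have hfib : ∀ GR ∈ Mfil V i,
      ((Yfil V i).filter fun Z => Z.1 = GR).card + Fintype.card V
        = Fintype.card V * (Fintype.card V - i) := by
    intro GR hGR
    obtain ⟨hgood, hec⟩ := mem_Mfil.1 hGR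
    -- fiber ≃ pairs (u,v)
    have h1 : ((Yfil V i).filter fun Z => Z.1 = GR).card =
        (Finset.univ.filter fun uv : V × V =>
          uv.1 ∈ GR.2 ∧ ¬ GR.1.Reachable uv.1 uv.2).card := by
      apply Finset.card_bij (fun Z _ => Z.2)
      · intro Z hZ
        obtain ⟨hZY, hZ1⟩ := Finset.mem_filter.1 hZ
        obtain ⟨-, -, h3, h4⟩ := mem_Yfil.1 hZY
        rw [hZ1] at h3 h4
        exact Finset.mem_filter.2 ⟨Finset.mem_univ _, h3, h4⟩
      · intro Z hZmem Z' hZ'mem heq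
        obtain ⟨-, hZ1⟩ := Finset.mem_filter.1 hZmem
        obtain ⟨-, hZ'1⟩ := Finset.mem_filter.1 hZ'mem
        exact Prod.ext (hZ1.trans hZ'1.symm) heq
      · intro uv huv
        obtain ⟨-, h3, h4⟩ := Finset.mem_filter.1 huv
        exact ⟨⟨GR, uv⟩, Finset.mem_filter.2 ⟨mem_Yfil.2 ⟨hgood, hec, h3, h4⟩, rfl⟩, rfl⟩
    rw [h1]
    -- now count the moves
    have hmap2 : ∀ uv ∈ (Finset.univ.filter fun uv : V × V =>
        uv.1 ∈ GR.2 ∧ ¬ GR.1.Reachable uv.1 uv.2), uv.1 ∈ GR.2 := by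
      intro uv huv
      exact ((Finset.mem_filter.1 huv).2).1
    rw [Finset.card_eq_sum_card_fiberwise hmap2]
    have hfib2 : ∀ u ∈ GR.2,
        (((Finset.univ.filter fun uv : V × V =>
            uv.1 ∈ GR.2 ∧ ¬ GR.1.Reachable uv.1 uv.2)).filter
              fun uv => uv.1 = u).card
          = (Finset.univ.filter fun w => ¬ GR.1.Reachable u w).card := by
      intro u hu
      apply Finset.card_bij (fun uv _ => uv.2)
      · intro uv huv
        obtain ⟨h5, h6⟩ := Finset.mem_filter.1 huv
        obtain ⟨-, -, h7⟩ := Finset.mem_filter.1 h5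
        rw [h6] at h7
        exact Finset.mem_filter.2 ⟨Finset.mem_univ _, h7⟩
      · intro uv h1' uv' h2' heq
        obtain ⟨-, e1⟩ := Finset.mem_filter.1 h1'
        obtain ⟨-, e2⟩ := Finset.mem_filter.1 h2'
        exact Prod.ext (e1.trans e2.symm) heq
      · intro w hw
        obtain ⟨-, h7⟩ := Finset.mem_filter.1 hw
        exact ⟨⟨u, w⟩, Finset.mem_filter.2
          ⟨Finset.mem_filter.2 ⟨Finset.mem_univ _, hu, h7⟩, rfl⟩, rfl⟩
    rw [Finset.sum_congr rfl hfib2]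
    -- ∑_{u ∈ R} (#¬reach u) + k = k * (k - i)
    have hsplit : ∀ u : V,
        (Finset.univ.filter fun w => ¬ GR.1.Reachable u w).card
          + (Finset.univ.filter fun w => GR.1.Reachable u w).card
        = Fintype.card V := by
      intro u
      rw [← Finset.card_univ]
      rw [add_comm]
      exact Finset.card_filter_add_card_filter_not _
    have hR : GR.2.card + i = Fintype.card V := card_roots i GR.1 GR.2 hgood hec
    have hcomp := sum_comp hgood
    have := Finset.sum_add_distrib (s := GR.2)
      (f := fun u => (Finset.univ.filter fun w => ¬ GR.1.Reachable u w).card)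
      (g := fun u => (Finset.univ.filter fun w => GR.1.Reachable u w).card)
    rw [Finset.sum_congr rfl (fun u _ => hsplit u), Finset.sum_const, smul_eq_mul] at this
    rw [hcomp] at this
    -- this : ∑ ¬reach + k = R.card * k
    have : (∑ u ∈ GR.2, (Finset.univ.filter fun w => ¬ GR.1.Reachable u w).card)
        = GR.2.card * Fintype.card V - Fintype.card V := by omega
    rw [this]
    have hk : Fintype.card V ≤ GR.2.card * Fintype.card V := by
      rcases Nat.eq_zero_or_pos (Fintype.card V) with hk0 | hk0
      · simp [hk0]
      · have hne : GR.2.Nonempty := by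
          obtain ⟨w⟩ := Fintype.card_pos_iff.1 hk0
          obtain ⟨r, hr, -⟩ := hgood.2 w
          exact ⟨r, hr.1⟩
        calc Fintype.card V = 1 * Fintype.card V := (one_mul _).symm
          _ ≤ GR.2.card * Fintype.card V :=
            Nat.mul_le_mul_right _ hne.card_pos
    have : GR.2.card * Fintype.card V = Fintype.card V * (Fintype.card V - i) := by
      rw [Nat.mul_comm]
      congr 1
      omega
    omega
  calc (∑ GR ∈ Mfil V i, ((Yfil V i).filter fun Z => Z.1 = GR).card)
        + Fintype.card V * (Mfil V i).card
      = ∑ GR ∈ Mfil V i, (((Yfil V i).filter fun Z => Z.1 = GR).card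
          + Fintype.card V) := by
        rw [Finset.sum_add_distrib, Finset.sum_const, smul_eq_mul, Nat.mul_comm]
    _ = ∑ _GR ∈ Mfil V i, Fintype.card V * (Fintype.card V - i) :=
        Finset.sum_congr rfl hfib
    _ = Fintype.card V * (Fintype.card V - i) * (Mfil V i).card := by
        rw [Finset.sum_const, smul_eq_mul, Nat.mul_comm]

lemma M_zero : (Mfil V 0).card = 1 := by
  have h : Mfil V 0 = {((⊥ : SimpleGraph V), (Finset.univ : Finset V))} := by
    ext GR
    rw [mem_Mfil, Finset.mem_singleton]
    constructor
    · rintro ⟨h1, h2⟩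
      obtain ⟨hb, hu⟩ := goodPair_ec_zero h1 h2
      exact Prod.ext hb hu
    · rintro rfl
      exact ⟨goodPair_bot, ec_bot⟩
  rw [h, Finset.card_singleton]

theorem M_closed (i : ℕ) :
    (Mfil V i).card = (Fintype.card V - 1).choose i * (Fintype.card V)^i := by
  induction i with
  | zero => simp [M_zero]
  | succ i ih =>
    set k := Fintype.card V with hk
    have hrec : (Mfil V (i+1)).card * (i+1) + k * (Mfil V i).card
        = k * (k - i) * (Mfil V i).card := by
      rw [← cardA, cardXY]
      exact cardY i
    rw [ih] at hrec
    set C := (k-1).choose i with hC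
    have hE : ((k-1).choose (i+1) * k^(i+1)) * (i+1) + k * (C * k^i)
        = k * (k - i) * (C * k^i) := by
      by_cases hk0 : k = 0
      · rw [hk0]
        simp
      by_cases hik : i + 1 ≤ k
      · have h1 : (k-1).choose (i+1) * (i+1) = C * (k-1-i) :=
          Nat.choose_succ_right_eq (k-1) i
        have e1 : ((k-1).choose (i+1) * k^(i+1)) * (i+1)
            = ((k-1).choose (i+1) * (i+1)) * k^(i+1) := by ring
        rw [e1, h1]
        have e2 : C * (k-1-i) * k^(i+1) + k * (C * k^i)
            = (C * k^(i+1)) * (k-1-i) + (C * k^(i+1)) := by ring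
        have e3 : k * (k - i) * (C * k^i) = (C * k^(i+1)) * (k - i) := by ring
        rw [e2, e3, ← Nat.mul_succ]
        congr 1
        omega
      · have hc1 : C = 0 := by
          rw [hC]
          exact Nat.choose_eq_zero_of_lt (by omega)
        have hc2 : (k-1).choose (i+1) = 0 := Nat.choose_eq_zero_of_lt (by omega)
        simp [hc1, hc2]
    have hfin : (Mfil V (i+1)).card * (i+1)
        = ((k-1).choose (i+1) * k^(i+1)) * (i+1) := by omega
    exact Nat.eq_of_mul_eq_mul_right (Nat.succ_pos i) hfin

end BigCount
end ForestCount

end ForestTheory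

section ProbTheory
open SimpleGraph
namespace ERProb

/-- the weight of a single coordinate -/
def wgt (p : ℝ) (b : Bool) : ℝ := if b then p else 1 - p

lemma bernoulli_prob (p : ℝ) (hp0 : 0 ≤ p) (hp1 : p ≤ 1) :
    IsProbabilityMeasure (bernoulliMeasure p) := by
  constructor
  rw [bernoulliMeasure]
  simp only [Measure.coe_add, Pi.add_apply, Measure.smul_apply, smul_eq_mul]
  rw [Measure.dirac_apply' _ MeasurableSet.univ, Measure.dirac_apply' _ MeasurableSet.univ]
  simp only [Set.mem_univ, Set.indicator_of_mem, Pi.one_apply, mul_one]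
  rw [← ENNReal.ofReal_add hp0 (by linarith)]
  norm_num

lemma bernoulli_singleton (p : ℝ) (hp0 : 0 ≤ p) (hp1 : p ≤ 1) (b : Bool) :
    (bernoulliMeasure p) {b} = ENNReal.ofReal (wgt p b) := by
  rw [bernoulliMeasure]
  simp only [Measure.coe_add, Pi.add_apply, Measure.smul_apply, smul_eq_mul]
  rw [Measure.dirac_apply, Measure.dirac_apply]
  cases b <;> simp [wgt]

lemma wgt_nonneg {p : ℝ} (hp0 : 0 ≤ p) (hp1 : p ≤ 1) (b : Bool) : 0 ≤ wgt p b := by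
  cases b <;> simp [wgt] <;> linarith

lemma wgt_total {p : ℝ} : wgt p true + wgt p false = 1 := by simp [wgt]

/-- The integral over `erMeasure` as a finite weighted sum. -/
lemma integral_er (n : ℕ) (p : ℝ) (hp0 : 0 ≤ p) (hp1 : p ≤ 1)
    (f : (Sym2 (Fin n) → Bool) → ℝ) :
    ∫ ω, f ω ∂(erMeasure n p)
      = ∑ ω : Sym2 (Fin n) → Bool, (∏ e, wgt p (ω e)) * f ω := by
  haveI := bernoulli_prob p hp0 hp1
  haveI : IsProbabilityMeasure (erMeasure n p) := by
    rw [erMeasure]; infer_instance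
  rw [MeasureTheory.integral_fintype (Integrable.of_finite)]
  refine Finset.sum_congr rfl fun ω _ => ?_
  rw [smul_eq_mul]
  congr 1
  have h1 : ({ω} : Set (Sym2 (Fin n) → Bool)) = Set.univ.pi fun e => {ω e} :=
    (Set.univ_pi_singleton ω).symm
  rw [measureReal_def, erMeasure, h1, Measure.pi_pi]
  have h2 : ∀ e : Sym2 (Fin n), (bernoulliMeasure p) {ω e} = ENNReal.ofReal (wgt p (ω e)) :=
    fun e => bernoulli_singleton p hp0 hp1 (ω e)
  rw [Finset.prod_congr rfl fun e _ => h2 e]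
  rw [← ENNReal.ofReal_prod_of_nonneg (fun e _ => wgt_nonneg hp0 hp1 (ω e))]
  rw [ENNReal.toReal_ofReal (Finset.prod_nonneg fun e _ => wgt_nonneg hp0 hp1 (ω e))]

/-- sum of products of weights over all boolean functions is 1. -/
lemma sum_prod_wgt {ι : Type*} [Fintype ι] [DecidableEq ι] {p : ℝ} :
    ∑ g : ι → Bool, ∏ i, wgt p (g i) = 1 := by
  have h := Finset.prod_univ_sum (fun _ : ι => (Finset.univ : Finset Bool))
    (fun _ b => wgt p b)
  have h2 : ∀ i : ι, ∑ b : Bool, wgt p b = 1 := fun i => by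
    rw [Fintype.sum_bool]; exact wgt_total
  rw [Finset.prod_congr rfl fun i _ => h2 i] at h
  rw [Finset.prod_const_one, Fintype.piFinset_univ] at h
  exact h.symm

/-- Summing a function of a restriction along an injection. -/
lemma sum_restrict {A B : Type*} [Fintype A] [Fintype B] [DecidableEq A] [DecidableEq B]
    (j : A → B) (hj : Function.Injective j) {p : ℝ}
    (F : (A → Bool) → ℝ) :
    ∑ ω : B → Bool, (∏ b, wgt p (ω b)) * F (ω ∘ j)
      = ∑ σ : A → Bool, (∏ a, wgt p (σ a)) * F σ := by
  classical
  set E : (B → Bool) ≃ ((A → Bool) × ({b // b ∉ Set.range j} → Bool)) :=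
    { toFun := fun ω => (fun a => ω (j a), fun b => ω b.1)
      invFun := fun στ => fun b =>
        if h : ∃ a, j a = b then στ.1 (Classical.choose h)
        else στ.2 ⟨b, fun hc => h hc⟩
      left_inv := by
        intro ω
        funext b
        by_cases h : ∃ a, j a = b
        · simp only [dif_pos h]
          rw [Classical.choose_spec h]
        · simp only [dif_neg h]
      right_inv := by
        rintro ⟨σ, τ⟩
        refine Prod.ext (funext fun a => ?_) (funext fun c => ?_)
        · have h : ∃ a', j a' = j a := ⟨a, rfl⟩
          simp only [dif_pos h]
          congr 1
          exact hj (Classical.choose_spec h)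
        · have h : ¬ ∃ a', j a' = (c : B) := c.2
          simp only [dif_neg h] }
  set g : ((A → Bool) × ({b // b ∉ Set.range j} → Bool)) → ℝ :=
    fun στ => ((∏ a, wgt p (στ.1 a)) * F στ.1) * (∏ c, wgt p (στ.2 c)) with hg
  have key : ∀ ω : B → Bool, (∏ b, wgt p (ω b)) * F (ω ∘ j) = g (E ω) := by
    intro ω
    show _ = ((∏ a, wgt p (ω (j a))) * F (fun a => ω (j a)))
      * (∏ c : {b // b ∉ Set.range j}, wgt p (ω c.1))
    have hsplit : (∏ b, wgt p (ω b))
        = (∏ a, wgt p (ω (j a))) * (∏ c : {b // b ∉ Set.range j}, wgt p (ω c.1)) := by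
      let e2 : ({b // b ∈ Set.range j} ⊕ {b // b ∉ Set.range j}) ≃ B :=
        Equiv.sumCompl (· ∈ Set.range j)
      have h0 : ∏ b : B, wgt p (ω b) = ∏ x, wgt p (ω (e2 x)) :=
        (Fintype.prod_equiv e2 (fun x => wgt p (ω (e2 x))) (fun b => wgt p (ω b))
          (fun x => rfl)).symm
      rw [h0, Fintype.prod_sum_type]
      congr 1
      · exact (Fintype.prod_equiv (Equiv.ofInjective j hj)
          (fun a => wgt p (ω (j a))) (fun x => wgt p (ω (e2 (Sum.inl x))))
          (fun a => rfl)).symm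
    rw [hsplit]
    have hF : F (ω ∘ j) = F (fun a => ω (j a)) := rfl
    rw [hF]
    ring
  calc ∑ ω : B → Bool, (∏ b, wgt p (ω b)) * F (ω ∘ j)
      = ∑ ω : B → Bool, g (E ω) := Finset.sum_congr rfl fun ω _ => key ω
    _ = ∑ στ, g στ := Equiv.sum_comp E g
    _ = ∑ σ : A → Bool, ∑ τ : {b // b ∉ Set.range j} → Bool, g (σ, τ) :=
        Fintype.sum_prod_type g
    _ = ∑ σ : A → Bool, (∏ a, wgt p (σ a)) * F σ := by
        refine Finset.sum_congr rfl fun σ _ => ?_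
        rw [hg]
        simp only
        rw [← Finset.mul_sum, sum_prod_wgt, mul_one]

end ERProb

namespace ERIso

lemma iso_acyclic {A B : Type*} {G : SimpleGraph A} {H : SimpleGraph B} (φ : G ≃g H)
    (h : G.IsAcyclic) : H.IsAcyclic := by
  intro v c hc
  exact h ((c.map φ.symm.toHom)) (hc.map (φ.symm.toEquiv.injective))

lemma iso_reachable {A B : Type*} {G : SimpleGraph A} {H : SimpleGraph B} (φ : G ≃g H)
    {u v : A} : G.Reachable u v ↔ H.Reachable (φ u) (φ v) := by
  constructor
  · exact fun h => h.map φ.toHom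
  · intro h
    have := h.map φ.symm.toHom
    simpa using this

/-- The transfer of the induced-subgraph conditions along `orderIsoOfFin`. -/
lemma transfer (n k : ℕ) (ω : Sym2 (Fin n) → Bool) (S : Finset (Fin n))
    (hS : S.card = k) (R : Finset (Fin n)) :
    (((erGraph n ω).induce (S : Set (Fin n))).IsAcyclic ∧
      ∀ v : (S : Set (Fin n)), ∃! r : (S : Set (Fin n)),
        (r : Fin n) ∈ R ∧ ((erGraph n ω).induce (S : Set (Fin n))).Reachable r v)
    ↔ goodPair (erGraph k (fun z => ω (z.map (fun i => ((S.orderIsoOfFin hS i : Fin n))))))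
        (Finset.univ.filter fun i : Fin k => ((S.orderIsoOfFin hS i : Fin n)) ∈ R) := by
  set ι : Fin k → Fin n := fun i => ((S.orderIsoOfFin hS i : Fin n)) with hι
  set e : Fin k ≃ (S : Set (Fin n)) := (S.orderIsoOfFin hS).toEquiv with he
  set Gk := erGraph k (fun z => ω (z.map ι)) with hGk
  set GS := (erGraph n ω).induce (S : Set (Fin n)) with hGS
  have hmapeq : ∀ a b : Fin k, (Sym2.map ι s(a, b)) = s(ι a, ι b) := fun a b => Sym2.map_pair_eq ι a b
  have hinj : Function.Injective ι := fun a b hab => e.injective (Subtype.ext hab)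
  have adj_iff : ∀ a b : Fin k, GS.Adj (e a) (e b) ↔ Gk.Adj a b := by
    intro a b
    show (erGraph n ω).Adj (ι a) (ι b) ↔ Gk.Adj a b
    constructor
    · rintro ⟨h1, h2⟩
      refine ⟨fun hc => h1 (hc ▸ rfl), ?_⟩
      show ω (Sym2.map ι s(a, b))
      rw [hmapeq]; exact h2
    · rintro ⟨h1, h2⟩
      refine ⟨fun hc => h1 (hinj hc), ?_⟩
      have : ω (Sym2.map ι s(a, b)) := h2
      rwa [hmapeq] at this
  set φ : Gk ≃g GS := ⟨e, fun {a b} => adj_iff a b⟩ with hφ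
  constructor
  · rintro ⟨hac, hroot⟩
    refine ⟨iso_acyclic φ.symm hac, ?_⟩
    intro w
    obtain ⟨r, ⟨hrR, hrreach⟩, huniq⟩ := hroot (e w)
    refine ⟨e.symm r, ⟨?_, ?_⟩, ?_⟩
    · rw [Finset.mem_filter]
      refine ⟨Finset.mem_univ _, ?_⟩
      show ι (e.symm r) ∈ R
      have : ι (e.symm r) = (r : Fin n) := congrArg Subtype.val (e.apply_symm_apply r)
      rwa [this]
    · have h1 : GS.Reachable r (e w) := hrreach
      have h2 := (iso_reachable φ (u := e.symm r) (v := w)).2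
      apply h2
      rw [show φ (e.symm r) = e (e.symm r) from rfl, e.apply_symm_apply]
      exact h1
    · rintro s ⟨hsmem, hsreach⟩
      rw [Finset.mem_filter] at hsmem
      have h3 : GS.Reachable (e s) (e w) := (iso_reachable φ).1 hsreach
      have h4 : (e s : Fin n) ∈ R := hsmem.2
      have := huniq (e s) ⟨h4, h3⟩
      rw [← this, e.symm_apply_apply]
  · rintro ⟨hac, hroot⟩
    refine ⟨iso_acyclic φ hac, ?_⟩
    intro w
    obtain ⟨r, ⟨hrR, hrreach⟩, huniq⟩ := hroot (e.symm w)
    rw [Finset.mem_filter] at hrR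
    refine ⟨e r, ⟨hrR.2, ?_⟩, ?_⟩
    · have := (iso_reachable φ).1 hrreach
      rwa [show φ (e.symm w) = e (e.symm w) from rfl, e.apply_symm_apply] at this
    · rintro s ⟨hsmem, hsreach⟩
      have h3 : Gk.Reachable (e.symm s) (e.symm w) := by
        rw [iso_reachable φ]
        rw [show φ (e.symm s) = e (e.symm s) from rfl, show φ (e.symm w) = e (e.symm w) from rfl,
          e.apply_symm_apply, e.apply_symm_apply]
        exact hsreach
      have h4 : e.symm s ∈ Finset.univ.filter fun i : Fin k => ι i ∈ R := by
        rw [Finset.mem_filter]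
        refine ⟨Finset.mem_univ _, ?_⟩
        have : ι (e.symm s) = (s : Fin n) := congrArg Subtype.val (e.apply_symm_apply s)
        rw [this]
        exact hsmem
      have := huniq (e.symm s) ⟨h4, h3⟩
      rw [← this, e.apply_symm_apply]

end ERIso

namespace Assembly
open ERProb ForestCount ERIso Finset

variable (k : ℕ) (p : ℝ)

/-- diagonal-free extension -/
def extendD {k : ℕ} (τ : {d : Sym2 (Fin k) // ¬ d.IsDiag} → Bool) : Sym2 (Fin k) → Bool :=
  fun z => if h : z.IsDiag then false else τ ⟨z, h⟩

lemma erGraph_extendD {k : ℕ} (σ : Sym2 (Fin k) → Bool) :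
    erGraph k σ = erGraph k (extendD (fun d => σ d.1)) := by
  ext u v
  show (u ≠ v ∧ σ s(u,v)) ↔ (u ≠ v ∧ extendD (fun d => σ d.1) s(u,v))
  constructor
  · rintro ⟨h1, h2⟩
    refine ⟨h1, ?_⟩
    rw [extendD, dif_neg (by simpa [Sym2.mk_isDiag_iff] using h1)]
    exact h2
  · rintro ⟨h1, h2⟩
    refine ⟨h1, ?_⟩
    rwa [extendD, dif_neg (by simpa [Sym2.mk_isDiag_iff] using h1)] at h2

lemma edgeSet_erGraph {k : ℕ} (σ : Sym2 (Fin k) → Bool) :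
    (erGraph k σ).edgeSet
      = Subtype.val '' {d : {d : Sym2 (Fin k) // ¬ d.IsDiag} | σ d.1 = true} := by
  ext e
  induction e using Sym2.ind with
  | _ u v =>
    simp only [mem_edgeSet, Set.mem_image, Set.mem_setOf_eq]
    constructor
    · rintro ⟨h1, h2⟩
      exact ⟨⟨s(u,v), by simpa [Sym2.mk_isDiag_iff] using h1⟩, by simpa using h2, rfl⟩
    · rintro ⟨d, hd, hde⟩
      have hdiag : ¬ (s(u,v) : Sym2 (Fin k)).IsDiag := hde ▸ d.2
      refine ⟨by simpa [Sym2.mk_isDiag_iff] using hdiag, ?_⟩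
      have : σ d.1 = true := hd
      rw [hde] at this
      simpa using this

lemma ec_extendD {k : ℕ} (τ : {d : Sym2 (Fin k) // ¬ d.IsDiag} → Bool) :
    ec (erGraph k (extendD τ)) = (Finset.univ.filter fun d => τ d = true).card := by
  rw [ec, edgeSet_erGraph]
  rw [Set.ncard_image_of_injective _ Subtype.val_injective]
  have h : {d : {d : Sym2 (Fin k) // ¬ d.IsDiag} | extendD τ d.1 = true}
      = {d | τ d = true} := by
    ext d
    simp only [Set.mem_setOf_eq]
    rw [extendD, dif_neg d.2]
  rw [h, ← Set.ncard_coe_finset]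
  congr 1
  ext d
  simp

/-- Edge-indicator functions on off-diagonal `Sym2` elements are in bijection with graphs. -/
noncomputable def graphEquiv (k : ℕ) :
    ({d : Sym2 (Fin k) // ¬ d.IsDiag} → Bool) ≃ SimpleGraph (Fin k) where
  toFun τ := erGraph k (extendD τ)
  invFun G := fun d => if d.1 ∈ G.edgeSet then true else false
  left_inv := by
    intro τ
    funext d
    obtain ⟨z, hz⟩ := d
    induction z using Sym2.ind with
    | _ u v =>
      have huv : u ≠ v := by simpa [Sym2.mk_isDiag_iff] using hz
      have hmem : s(u,v) ∈ (erGraph k (extendD τ)).edgeSet ↔ τ ⟨s(u,v), hz⟩ = true := by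
        rw [mem_edgeSet]
        show (u ≠ v ∧ extendD τ s(u,v)) ↔ _
        rw [extendD, dif_neg hz]
        simp [huv]
      by_cases h : τ ⟨s(u,v), hz⟩ = true
      · simp [hmem.2 h, h]
      · have h2 : ¬ s(u,v) ∈ (erGraph k (extendD τ)).edgeSet := fun hc => h (hmem.1 hc)
        simp only [if_neg h2]
        simp only [Bool.not_eq_true] at h
        exact h.symm
  right_inv := by
    intro G
    ext u v
    show (u ≠ v ∧ extendD (fun d => if d.1 ∈ G.edgeSet then true else false) s(u,v) = true)
      ↔ G.Adj u v
    constructor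
    · rintro ⟨h1, h2⟩
      rw [extendD, dif_neg (by simpa [Sym2.mk_isDiag_iff] using h1)] at h2
      by_cases h : s(u,v) ∈ G.edgeSet
      · exact (SimpleGraph.mem_edgeSet G).1 h
      · rw [if_neg h] at h2
        exact absurd h2 (by simp)
    · intro h
      refine ⟨h.ne, ?_⟩
      rw [extendD, dif_neg (by simpa [Sym2.mk_isDiag_iff] using h.ne)]
      rw [if_pos ((SimpleGraph.mem_edgeSet G).2 h)]

/-- The number of root sets making `G` good. -/
noncomputable def Nval {k : ℕ} (G : SimpleGraph (Fin k)) : ℕ :=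
  (Finset.univ.filter fun R' : Finset (Fin k) => goodPair G R').card

lemma sum_Nval_eq_Mcard (k i : ℕ) :
    ∑ τ ∈ (Finset.univ.filter fun τ : {d : Sym2 (Fin k) // ¬ d.IsDiag} → Bool =>
      (Finset.univ.filter fun d => τ d = true).card = i),
        Nval (erGraph k (extendD τ))
      = (Mfil (Fin k) i).card := by
  -- first: Mfil card = ∑ over graphs with i edges of Nval
  have h1 : (Mfil (Fin k) i).card
      = ∑ G ∈ (Finset.univ.filter fun G : SimpleGraph (Fin k) => ec G = i), Nval G := by
    have hmap : ∀ GR ∈ Mfil (Fin k) i,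
        GR.1 ∈ (Finset.univ.filter fun G : SimpleGraph (Fin k) => ec G = i) := by
      intro GR hGR
      obtain ⟨h1, h2⟩ := mem_Mfil.1 hGR
      exact Finset.mem_filter.2 ⟨Finset.mem_univ _, h2⟩
    rw [Finset.card_eq_sum_card_fiberwise hmap]
    refine Finset.sum_congr rfl fun G hG => ?_
    obtain ⟨-, hec⟩ := Finset.mem_filter.1 hG
    apply Finset.card_bij (fun GR _ => GR.2)
    · intro GR hGR
      obtain ⟨hGRM, hfst⟩ := Finset.mem_filter.1 hGR
      obtain ⟨hg, -⟩ := mem_Mfil.1 hGRM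
      rw [hfst] at hg
      exact Finset.mem_filter.2 ⟨Finset.mem_univ _, hg⟩
    · intro GR h GR' h' heq
      obtain ⟨-, e1⟩ := Finset.mem_filter.1 h
      obtain ⟨-, e2⟩ := Finset.mem_filter.1 h'
      exact Prod.ext (e1.trans e2.symm) heq
    · intro R hR
      obtain ⟨-, hg⟩ := Finset.mem_filter.1 hR
      exact ⟨(G, R), Finset.mem_filter.2 ⟨mem_Mfil.2 ⟨hg, hec⟩, rfl⟩, rfl⟩
  rw [h1]
  -- then: change variables along graphEquiv
  apply Finset.sum_nbij' (fun τ => erGraph k (extendD τ))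
    (fun G => (graphEquiv k).symm G)
  · intro τ hτ
    obtain ⟨-, hc⟩ := Finset.mem_filter.1 hτ
    exact Finset.mem_filter.2 ⟨Finset.mem_univ _, by rw [ec_extendD, hc]⟩
  · intro G hG
    obtain ⟨-, hec⟩ := Finset.mem_filter.1 hG
    refine Finset.mem_filter.2 ⟨Finset.mem_univ _, ?_⟩
    have h2 : erGraph k (extendD ((graphEquiv k).symm G)) = G := (graphEquiv k).apply_symm_apply G
    rw [← ec_extendD ((graphEquiv k).symm G), h2]
    exact hec
  · intro τ _
    exact (graphEquiv k).symm_apply_apply τ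
  · intro G _
    exact (graphEquiv k).apply_symm_apply G
  · intro τ _
    rfl

lemma Tsum_eq (k : ℕ) (p : ℝ) :
    ∑ σ : Sym2 (Fin k) → Bool, (∏ e, wgt p (σ e)) * (Nval (erGraph k σ) : ℝ)
      = ∑ i ∈ Finset.range (k.choose 2 + 1),
          p^i * (1-p)^(k.choose 2 - i) * (((k-1).choose i * k^i : ℕ) : ℝ) := by
  set D := {d : Sym2 (Fin k) // ¬ d.IsDiag} with hD
  set F : (D → Bool) → ℝ := fun τ => (Nval (erGraph k (extendD τ)) : ℝ) with hF
  have step1 : ∑ σ : Sym2 (Fin k) → Bool, (∏ e, wgt p (σ e)) * (Nval (erGraph k σ) : ℝ)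
      = ∑ τ : D → Bool, (∏ d, wgt p (τ d)) * F τ := by
    have h0 : ∀ σ : Sym2 (Fin k) → Bool,
        (∏ e, wgt p (σ e)) * (Nval (erGraph k σ) : ℝ)
          = (∏ e, wgt p (σ e)) * F (σ ∘ Subtype.val) := by
      intro σ
      congr 2
      exact congrArg Nval (erGraph_extendD σ)
    rw [Finset.sum_congr rfl fun σ _ => h0 σ]
    exact sum_restrict Subtype.val Subtype.val_injective F
  rw [step1]
  set CD := k.choose 2 with hCDdef
  have hCD : Fintype.card D = CD := by
    show Fintype.card {d : Sym2 (Fin k) // ¬ d.IsDiag} = CD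
    rw [Sym2.card_subtype_not_diag, Fintype.card_fin]
  set c : (D → Bool) → ℕ := fun τ => (Finset.univ.filter fun d => τ d = true).card with hc
  have wfact : ∀ τ : D → Bool, (∏ d, wgt p (τ d)) = p^(c τ) * (1-p)^(CD - c τ) := by
    intro τ
    rw [← Finset.prod_filter_mul_prod_filter_not Finset.univ (fun d => τ d = true)
      (fun d => wgt p (τ d))]
    have h1 : ∏ d ∈ Finset.univ.filter (fun d => τ d = true), wgt p (τ d) = p ^ (c τ) := by
      rw [Finset.prod_congr rfl (fun d hd => ?_), Finset.prod_const]
      rw [wgt, if_pos (Finset.mem_filter.1 hd).2]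
    have hcc : (Finset.univ.filter fun d => ¬ τ d = true).card = CD - c τ := by
      have := Finset.card_filter_add_card_filter_not
        (s := Finset.univ) (p := fun d : D => τ d = true)
      rw [Finset.card_univ, hCD] at this
      have hcτ : c τ = (Finset.univ.filter fun d => τ d = true).card := rfl
      omega
    have h2 : ∏ d ∈ Finset.univ.filter (fun d => ¬ τ d = true), wgt p (τ d)
        = (1-p) ^ (CD - c τ) := by
      rw [Finset.prod_congr rfl (fun d hd => ?_), Finset.prod_const, hcc]
      have hdf := (Finset.mem_filter.1 hd).2
      rw [wgt, if_neg hdf]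
    rw [h1, h2]
  rw [Finset.sum_congr rfl fun τ _ => by rw [wfact τ]]
  have hmaps : ∀ τ : D → Bool, τ ∈ Finset.univ → c τ ∈ Finset.range (CD + 1) := by
    intro τ _
    rw [Finset.mem_range]
    have : c τ ≤ Fintype.card D := by
      rw [← Finset.card_univ]
      exact Finset.card_filter_le _ _
    omega
  rw [← Finset.sum_fiberwise_of_maps_to hmaps
    (fun τ => p^(c τ) * (1-p)^(CD - c τ) * F τ)]
  refine Finset.sum_congr rfl fun i hi => ?_
  have hterm : ∀ τ ∈ Finset.univ.filter (fun τ : D → Bool => c τ = i),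
      p^(c τ) * (1-p)^(CD - c τ) * F τ = p^i * (1-p)^(CD - i) * F τ := by
    intro τ hτ
    rw [(Finset.mem_filter.1 hτ).2]
  rw [Finset.sum_congr rfl hterm, ← Finset.mul_sum]
  congr 1
  have hcast : ∑ τ ∈ Finset.univ.filter (fun τ : D → Bool => c τ = i), F τ
      = ((∑ τ ∈ Finset.univ.filter (fun τ : D → Bool => c τ = i),
          Nval (erGraph k (extendD τ)) : ℕ) : ℝ) := by
    rw [Nat.cast_sum]
  rw [hcast, sum_Nval_eq_Mcard k i, M_closed i, Fintype.card_fin]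

lemma final_algebra (k : ℕ) (p q : ℝ) (hk : 1 ≤ k) (hp0 : 0 < p) (hp1 : p < 1)
    (hq : q = 1 / (1 - p)) :
    ∑ i ∈ Finset.range (k.choose 2 + 1),
        p^i * (1-p)^(k.choose 2 - i) * (((k-1).choose i * k^i : ℕ) : ℝ)
      = q ^ (-(k.choose 2 : ℤ)) * ((k : ℝ) * p * q + 1) ^ (k - 1) := by
  set CD := k.choose 2 with hCD
  have h1p : (0:ℝ) < 1 - p := by linarith
  have hne : (1:ℝ) - p ≠ 0 := ne_of_gt h1p
  have hqeq : q = (1 - p)⁻¹ := by rw [hq, one_div]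
  have hCDk : k - 1 ≤ CD := by
    obtain ⟨m, rfl⟩ := Nat.exists_eq_add_of_le hk
    have : (1 + m).choose 2 = m.choose 1 + m.choose 2 := by
      have := Nat.choose_succ_succ m 1
      simpa [Nat.add_comm] using this
    rw [hCD, this, Nat.choose_one_right]
    omega
  have hzpow : q ^ (-(CD : ℤ)) = (1-p)^CD := by
    rw [hqeq, zpow_neg, ← inv_zpow, inv_inv, zpow_natCast]
  rw [hzpow]
  have hx : (k : ℝ) * p * q + 1 = (k : ℝ) * p / (1 - p) + 1 := by
    rw [hqeq, div_eq_mul_inv]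
  rw [hx]
  set x : ℝ := (k : ℝ) * p / (1 - p) with hxdef
  -- truncate the sum
  have htrunc : ∑ i ∈ Finset.range (CD + 1),
      p^i * (1-p)^(CD - i) * (((k-1).choose i * k^i : ℕ) : ℝ)
    = ∑ i ∈ Finset.range (k - 1 + 1),
      p^i * (1-p)^(CD - i) * (((k-1).choose i * k^i : ℕ) : ℝ) := by
    symm
    apply Finset.sum_subset
    · apply Finset.range_subset_range.2
      omega
    · intro i hi hni
      rw [Finset.mem_range] at hi
      rw [Finset.mem_range] at hni
      have : k - 1 < i := by omega
      rw [Nat.choose_eq_zero_of_lt this]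
      simp
  rw [htrunc]
  have hterm : ∀ i ∈ Finset.range (k - 1 + 1),
      p^i * (1-p)^(CD - i) * (((k-1).choose i * k^i : ℕ) : ℝ)
        = (1-p)^CD * (x^i * 1^(k-1-i) * ((k-1).choose i : ℝ)) := by
    intro i hi
    rw [Finset.mem_range] at hi
    have hiCD : i ≤ CD := by omega
    rw [pow_sub₀ _ hne hiCD, one_pow, hxdef, div_pow, mul_pow]
    push_cast
    field_simp
  rw [Finset.sum_congr rfl hterm, ← Finset.mul_sum]
  congr 1
  rw [add_pow x 1 (k-1)]

/-- the induced-subgraph rooted-forest condition -/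
def cond2 (n : ℕ) (ω : Sym2 (Fin n) → Bool) (S R : Finset (Fin n)) : Prop :=
  (((erGraph n ω).induce (S : Set (Fin n))).IsAcyclic ∧
    ∀ v : (S : Set (Fin n)), ∃! r : (S : Set (Fin n)),
      (r : Fin n) ∈ R ∧ ((erGraph n ω).induce (S : Set (Fin n))).Reachable r v)

noncomputable def TT (n : ℕ) (p : ℝ) (S R : Finset (Fin n)) : ℝ :=
  ∑ ω : Sym2 (Fin n) → Bool, (∏ e, wgt p (ω e)) * (if cond2 n ω S R then 1 else 0)

noncomputable def Tk (k : ℕ) (p : ℝ) (R' : Finset (Fin k)) : ℝ :=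
  ∑ σ : Sym2 (Fin k) → Bool, (∏ e, wgt p (σ e)) *
    (if goodPair (erGraph k σ) R' then 1 else 0)

lemma ind_mul (X Y : Prop) :
    (if (X ∧ Y) then (1:ℝ) else 0) = (if X then (1:ℝ) else 0) * (if Y then (1:ℝ) else 0) := by
  by_cases hX : X <;> by_cases hY : Y <;> simp [hX, hY]

lemma count_eq (n k : ℕ) (ω : Sym2 (Fin n) → Bool) :
    ((countIndRootedForests n k (erGraph n ω) : ℕ) : ℝ)
      = ∑ SR : Finset (Fin n) × Finset (Fin n),
          (if (SR.1.card = k ∧ SR.2 ⊆ SR.1) ∧ cond2 n ω SR.1 SR.2 then (1:ℝ) else 0) := by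
  rw [countIndRootedForests, Nat.card_eq_fintype_card, Fintype.card_subtype]
  rw [Finset.card_filter]
  push_cast
  refine Finset.sum_congr rfl fun SR _ => ?_
  congr 1
  rw [cond2]
  exact propext ⟨fun ⟨a, b, c, d⟩ => ⟨⟨a, b⟩, c, d⟩, fun ⟨⟨a, b⟩, c, d⟩ => ⟨a, b, c, d⟩⟩

lemma TT_eq (n k : ℕ) (p : ℝ) (S R : Finset (Fin n)) (hS : S.card = k) :
    TT n p S R
      = Tk k p (Finset.univ.filter fun i : Fin k => ((S.orderIsoOfFin hS i : Fin n)) ∈ R) := by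
  rw [TT]
  have h1 : ∀ ω : Sym2 (Fin n) → Bool,
      (if cond2 n ω S R then (1:ℝ) else 0)
        = (if goodPair
            (erGraph k (fun z => ω (z.map (fun i => ((S.orderIsoOfFin hS i : Fin n))))))
            (Finset.univ.filter fun i : Fin k => ((S.orderIsoOfFin hS i : Fin n)) ∈ R)
          then (1:ℝ) else 0) := by
    intro ω
    exact if_congr (ERIso.transfer n k ω S hS R) rfl rfl
  rw [Finset.sum_congr rfl fun ω _ => by rw [h1 ω]]
  have hinj : Function.Injective (fun i : Fin k => ((S.orderIsoOfFin hS i : Fin n))) :=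
    fun a b hab => (S.orderIsoOfFin hS).toEquiv.injective (Subtype.ext hab)
  exact sum_restrict (Sym2.map fun i => ((S.orderIsoOfFin hS i : Fin n)))
    (Sym2.map.injective hinj)
    (fun σ => if goodPair (erGraph k σ)
        (Finset.univ.filter fun i : Fin k => ((S.orderIsoOfFin hS i : Fin n)) ∈ R)
      then (1:ℝ) else 0)

lemma sum_powerset_TT (n k : ℕ) (p : ℝ) (S : Finset (Fin n)) (hS : S.card = k) :
    ∑ R ∈ S.powerset, TT n p S R = ∑ R' : Finset (Fin k), Tk k p R' := by
  have h1 : ∀ R ∈ S.powerset, TT n p S R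
      = Tk k p (Finset.univ.filter fun i : Fin k => ((S.orderIsoOfFin hS i : Fin n)) ∈ R) :=
    fun R _ => TT_eq n k p S R hS
  rw [Finset.sum_congr rfl h1]
  set ι : Fin k → Fin n := fun i => ((S.orderIsoOfFin hS i : Fin n)) with hι
  have hinj : Function.Injective ι := fun a b hab =>
    (S.orderIsoOfFin hS).toEquiv.injective (Subtype.ext hab)
  have hmem : ∀ i : Fin k, ι i ∈ S := fun i => (S.orderIsoOfFin hS i).2
  have hsurj : ∀ x ∈ S, ∃ i : Fin k, ι i = x := by
    intro x hx
    exact ⟨(S.orderIsoOfFin hS).symm ⟨x, hx⟩,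
      congrArg Subtype.val ((S.orderIsoOfFin hS).apply_symm_apply ⟨x, hx⟩)⟩
  apply Finset.sum_nbij' (fun R => Finset.univ.filter fun i : Fin k => ι i ∈ R)
    (fun R' => R'.image ι)
  · intro R _
    exact Finset.mem_univ _
  · intro R' _
    rw [Finset.mem_powerset]
    intro x hx
    obtain ⟨i, -, rfl⟩ := Finset.mem_image.1 hx
    exact hmem i
  · intro R hR
    rw [Finset.mem_powerset] at hR
    ext x
    simp only [Finset.mem_image, Finset.mem_filter, Finset.mem_univ, true_and]
    constructor
    · rintro ⟨i, hi, rfl⟩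
      exact hi
    · intro hx
      obtain ⟨i, hix⟩ := hsurj x (hR hx)
      exact ⟨i, hix.symm ▸ hx, hix⟩
  · intro R' _
    ext i
    simp only [Finset.mem_filter, Finset.mem_univ, true_and, Finset.mem_image]
    constructor
    · rintro ⟨i', hi', heq⟩
      exact (hinj heq) ▸ hi'
    · intro hi
      exact ⟨i, hi, rfl⟩
  · intro R _
    rfl

lemma sum_Tk (k : ℕ) (p : ℝ) :
    ∑ R' : Finset (Fin k), Tk k p R'
      = ∑ σ : Sym2 (Fin k) → Bool, (∏ e, wgt p (σ e)) * (Nval (erGraph k σ) : ℝ) := by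
  simp only [Tk]
  rw [Finset.sum_comm]
  refine Finset.sum_congr rfl fun σ _ => ?_
  rw [← Finset.mul_sum]
  congr 1
  rw [Finset.sum_boole, Nval]

theorem main_thm (n k : ℕ) (hk : 1 ≤ k) (hkn : k ≤ n) (p q : ℝ)
    (hp0 : 0 < p) (hp1 : p < 1) (hq : q = 1 / (1 - p)) :
    ∫ ω, (countIndRootedForests n k (erGraph n ω) : ℝ) ∂(erMeasure n p)
      = (n.choose k : ℝ) * q ^ (-(k.choose 2 : ℤ)) * ((k : ℝ) * p * q + 1) ^ (k - 1) := by
  classical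
  rw [integral_er n p hp0.le hp1.le]
  have h1 : ∀ ω : Sym2 (Fin n) → Bool,
      (∏ e, wgt p (ω e)) * ((countIndRootedForests n k (erGraph n ω) : ℕ) : ℝ)
        = ∑ SR : Finset (Fin n) × Finset (Fin n),
            (∏ e, wgt p (ω e)) *
              (if (SR.1.card = k ∧ SR.2 ⊆ SR.1) ∧ cond2 n ω SR.1 SR.2 then 1 else 0) := by
    intro ω
    rw [count_eq n k ω, Finset.mul_sum]
  rw [Finset.sum_congr rfl fun ω _ => h1 ω, Finset.sum_comm]
  have h2 : ∀ SR : Finset (Fin n) × Finset (Fin n),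
      (∑ ω : Sym2 (Fin n) → Bool, (∏ e, wgt p (ω e)) *
          (if (SR.1.card = k ∧ SR.2 ⊆ SR.1) ∧ cond2 n ω SR.1 SR.2 then 1 else 0))
        = if SR.1.card = k ∧ SR.2 ⊆ SR.1 then TT n p SR.1 SR.2 else 0 := by
    intro SR
    by_cases hc : SR.1.card = k ∧ SR.2 ⊆ SR.1
    · rw [if_pos hc, TT]
      refine Finset.sum_congr rfl fun ω _ => ?_
      congr 1
      exact if_congr (and_iff_right hc) rfl rfl
    · rw [if_neg hc]
      apply Finset.sum_eq_zero
      intro ω _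
      rw [if_neg (fun hcc => hc hcc.1), mul_zero]
  rw [Finset.sum_congr rfl fun SR _ => h2 SR, ← Finset.sum_filter]
  have hiff : ∀ SR : Finset (Fin n) × Finset (Fin n),
      SR ∈ Finset.univ.filter (fun SR : Finset (Fin n) × Finset (Fin n) =>
          SR.1.card = k ∧ SR.2 ⊆ SR.1)
        ↔ SR.1 ∈ Finset.univ.filter (fun S : Finset (Fin n) => S.card = k)
            ∧ SR.2 ∈ SR.1.powerset := by
    intro SR
    simp [Finset.mem_powerset]
  rw [Finset.sum_finset_product _ _ _ hiff]
  have h3 : ∀ S ∈ Finset.univ.filter (fun S : Finset (Fin n) => S.card = k),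
      (∑ R ∈ S.powerset, TT n p S R)
        = q ^ (-(k.choose 2 : ℤ)) * ((k : ℝ) * p * q + 1) ^ (k - 1) := by
    intro S hS
    have hSk : S.card = k := (Finset.mem_filter.1 hS).2
    rw [sum_powerset_TT n k p S hSk, sum_Tk, Tsum_eq, final_algebra k p q hk hp0 hp1 hq]
  rw [Finset.sum_congr rfl h3, Finset.sum_const, nsmul_eq_mul]
  have h4 : (Finset.univ.filter fun S : Finset (Fin n) => S.card = k).card = n.choose k := by
    have e1 : (Finset.univ.filter fun S : Finset (Fin n) => S.card = k)
        = Finset.powersetCard k (Finset.univ : Finset (Fin n)) := by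
      rw [Finset.powersetCard_eq_filter, Finset.powerset_univ]
    rw [e1, Finset.card_powersetCard, Finset.card_univ, Fintype.card_fin]
  rw [h4, mul_assoc]
  ring

end Assembly

end ProbTheory

/-- The expected number of induced rooted forests on `k` vertices in `G(n,p)` equals
`C(n,k) q^(-C(k,2)) (k p q + 1)^(k-1)` where `q = 1/(1-p)`. -/
theorem stmt_3 (n k : ℕ) (hk : 1 ≤ k) (hkn : k ≤ n) (p q : ℝ)
    (hp0 : 0 < p) (hp1 : p < 1) (hq : q = 1 / (1 - p)) :
    ∫ ω, (countIndRootedForests n k (erGraph n ω) : ℝ) ∂(erMeasure n p)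
      = (n.choose k : ℝ) * q ^ (-(k.choose 2 : ℤ)) * ((k : ℝ) * p * q + 1) ^ (k - 1) := by
  exact Assembly.main_thm n k hk hkn p q hp0 hp1 hq
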